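/- arXiv:2401.01166 — 2 statements merged into one kernel-verified Lean document; each statement's English description precedes it below -/
import Mathlib

section
/- Let x₀,…,x₇ be real numbers and set X = x₀·1 + x₁·e₀e₁ + x₂·e₂e₀ + x₃·e₁e₂ + x₄·e₀e₃ + x₅·e₁e₃ + x₆·e₂e₃ + x₇·e₀e₁e₂e₃ in Cl₄. If Q₁(x) = (x₀²+x₁²+x₂²+x₃²+x₄²+x₅²+x₆²+x₇²) − 2(x₁x₆ + x₂x₅ + x₃x₄) + 2x₀x₇ ≠ 0 and Q₂(x) = (x₀²+x₁²+x₂²+x₃²+x₄²+x₅²+x₆²+x₇²) + 2(x₁x₆ + x₂x₅ + x₃x₄) − 2x₀x₇ ≠ 0, then X is a unit (X has a two-sided multiplicative inverse in Cl₄). -/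
open CliffordAlgebra

/-- The positive-definite quadratic form `Q₄(v) = v₀² + v₁² + v₂² + v₃²` on `ℝ⁴`. -/
noncomputable def Q4 : QuadraticForm ℝ (Fin 4 → ℝ) :=
  QuadraticMap.weightedSumSquares ℝ (fun _ : Fin 4 => (1 : ℝ))

/-- The generators `e i` of the Clifford algebra `Cl₄ = Cl_{4,0}`. -/
noncomputable def e (i : Fin 4) : CliffordAlgebra Q4 :=
  CliffordAlgebra.ι Q4 (Pi.single i 1)

lemma e_sq (i : Fin 4) : e i * e i = 1 := by
  rw [e, ι_sq_scalar]
  have : Q4 (Pi.single i 1) = 1 := by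
    simp [Q4, QuadraticMap.weightedSumSquares_apply, Pi.single_apply]
  rw [this, map_one]

lemma e_anticomm {i j : Fin 4} (h : i ≠ j) : e j * e i = -(e i * e j) := by
  have hp : QuadraticMap.polar Q4 (Pi.single i 1) (Pi.single j 1) = 0 := by
    fin_cases i <;> fin_cases j <;>
      simp_all [QuadraticMap.polar, Q4, QuadraticMap.weightedSumSquares_apply,
        Fin.sum_univ_four, Pi.single_apply]
  have := CliffordAlgebra.ι_mul_ι_add_swap (Q := Q4) (Pi.single i 1) (Pi.single j 1)
  rw [hp, map_zero] at this
  rw [e, e]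
  linear_combination (norm := noncomm_ring) this




lemma e_sq_assoc0 (a : CliffordAlgebra Q4) : e 0 * (e 0 * a) = a := by
  rw [← mul_assoc, e_sq, one_mul]

lemma e_sq_assoc1 (a : CliffordAlgebra Q4) : e 1 * (e 1 * a) = a := by
  rw [← mul_assoc, e_sq, one_mul]

lemma e_sq_assoc2 (a : CliffordAlgebra Q4) : e 2 * (e 2 * a) = a := by
  rw [← mul_assoc, e_sq, one_mul]

lemma e_sq_assoc3 (a : CliffordAlgebra Q4) : e 3 * (e 3 * a) = a := by
  rw [← mul_assoc, e_sq, one_mul]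

lemma swap10 : e 1 * e 0 = -(e 0 * e 1) := e_anticomm (by decide)

lemma swap_assoc10 (a : CliffordAlgebra Q4) : e 1 * (e 0 * a) = -(e 0 * (e 1 * a)) := by
  rw [← mul_assoc, swap10, neg_mul, mul_assoc]

lemma swap20 : e 2 * e 0 = -(e 0 * e 2) := e_anticomm (by decide)

lemma swap_assoc20 (a : CliffordAlgebra Q4) : e 2 * (e 0 * a) = -(e 0 * (e 2 * a)) := by
  rw [← mul_assoc, swap20, neg_mul, mul_assoc]

lemma swap21 : e 2 * e 1 = -(e 1 * e 2) := e_anticomm (by decide)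

lemma swap_assoc21 (a : CliffordAlgebra Q4) : e 2 * (e 1 * a) = -(e 1 * (e 2 * a)) := by
  rw [← mul_assoc, swap21, neg_mul, mul_assoc]

lemma swap30 : e 3 * e 0 = -(e 0 * e 3) := e_anticomm (by decide)

lemma swap_assoc30 (a : CliffordAlgebra Q4) : e 3 * (e 0 * a) = -(e 0 * (e 3 * a)) := by
  rw [← mul_assoc, swap30, neg_mul, mul_assoc]

lemma swap31 : e 3 * e 1 = -(e 1 * e 3) := e_anticomm (by decide)

lemma swap_assoc31 (a : CliffordAlgebra Q4) : e 3 * (e 1 * a) = -(e 1 * (e 3 * a)) := by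
  rw [← mul_assoc, swap31, neg_mul, mul_assoc]

lemma swap32 : e 3 * e 2 = -(e 2 * e 3) := e_anticomm (by decide)

lemma swap_assoc32 (a : CliffordAlgebra Q4) : e 3 * (e 2 * a) = -(e 2 * (e 3 * a)) := by
  rw [← mul_assoc, swap32, neg_mul, mul_assoc]


set_option maxHeartbeats 4000000 in
/-- If both seminorm values `Q₁(x)` and `Q₂(x)` are nonzero, then the octonion-like
number `X = Σ xᵢ uᵢ` is a unit in `Cl₄`. -/
theorem octonionLike_isUnit_of_seminorms_ne_zero
    (x₀ x₁ x₂ x₃ x₄ x₅ x₆ x₇ : ℝ)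
    (h₁ : (x₀^2 + x₁^2 + x₂^2 + x₃^2 + x₄^2 + x₅^2 + x₆^2 + x₇^2) - 2*(x₁*x₆ + x₂*x₅ + x₃*x₄) + 2*x₀*x₇ ≠ 0)
    (h₂ : (x₀^2 + x₁^2 + x₂^2 + x₃^2 + x₄^2 + x₅^2 + x₆^2 + x₇^2) + 2*(x₁*x₆ + x₂*x₅ + x₃*x₄) - 2*x₀*x₇ ≠ 0) :
    IsUnit (x₀ • (1 : CliffordAlgebra Q4) + x₁ • (e 0 * e 1) + x₂ • (e 2 * e 0) +
      x₃ • (e 1 * e 2) + x₄ • (e 0 * e 3) + x₅ • (e 1 * e 3) + x₆ • (e 2 * e 3) +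
      x₇ • (e 0 * e 1 * e 2 * e 3)) := by
  set X : CliffordAlgebra Q4 := x₀ • (1 : CliffordAlgebra Q4) + x₁ • (e 0 * e 1) + x₂ • (e 2 * e 0) +
      x₃ • (e 1 * e 2) + x₄ • (e 0 * e 3) + x₅ • (e 1 * e 3) + x₆ • (e 2 * e 3) +
      x₇ • (e 0 * e 1 * e 2 * e 3) with hX
  set α : ℝ := x₀^2 + x₁^2 + x₂^2 + x₃^2 + x₄^2 + x₅^2 + x₆^2 + x₇^2 with hα
  set β : ℝ := 2*x₀*x₇ - 2*(x₁*x₆ + x₂*x₅ + x₃*x₄) with hβ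
  set Xb : CliffordAlgebra Q4 := x₀ • (1 : CliffordAlgebra Q4) - x₁ • (e 0 * e 1) - x₂ • (e 2 * e 0) -
      x₃ • (e 1 * e 2) - x₄ • (e 0 * e 3) - x₅ • (e 1 * e 3) - x₆ • (e 2 * e 3) +
      x₇ • (e 0 * e 1 * e 2 * e 3) with hXb
  set Z : CliffordAlgebra Q4 := α • Xb - β • (Xb * (e 0 * e 1 * e 2 * e 3)) with hZ
  have hc : (α + β) * (α - β) ≠ 0 := by
    apply mul_ne_zero
    · intro h; apply h₁; rw [hα, hβ] at h; linarith
    · intro h; apply h₂; rw [hα, hβ] at h; linarith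
  have key1 : X * Z = ((α + β) * (α - β)) • 1 := by
    rw [hX, hZ, hXb]
    simp only [mul_add, add_mul, mul_sub, sub_mul, smul_mul_assoc, mul_smul_comm, mul_assoc,
      one_mul, mul_one, smul_smul, smul_neg, neg_smul, mul_neg, neg_mul, neg_neg,
      e_sq_assoc0, e_sq_assoc1, e_sq_assoc2, e_sq_assoc3, e_sq, swap10, swap_assoc10, swap20, swap_assoc20, swap21, swap_assoc21, swap30, swap_assoc30, swap31, swap_assoc31, swap32, swap_assoc32, smul_add, smul_sub]
    match_scalars <;> ring
  have key2 : Z * X = ((α + β) * (α - β)) • 1 := by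
    rw [hX, hZ, hXb]
    simp only [mul_add, add_mul, mul_sub, sub_mul, smul_mul_assoc, mul_smul_comm, mul_assoc,
      one_mul, mul_one, smul_smul, smul_neg, neg_smul, mul_neg, neg_mul, neg_neg,
      e_sq_assoc0, e_sq_assoc1, e_sq_assoc2, e_sq_assoc3, e_sq, swap10, swap_assoc10, swap20, swap_assoc20, swap21, swap_assoc21, swap30, swap_assoc30, swap31, swap_assoc31, swap32, swap_assoc32, smul_add, smul_sub]
    match_scalars <;> ring
  rw [isUnit_iff_exists]
  refine ⟨((α + β) * (α - β))⁻¹ • Z, ?_, ?_⟩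
  · rw [mul_smul_comm, key1, smul_smul, inv_mul_cancel₀ hc, one_smul]
  · rw [smul_mul_assoc, key2, smul_smul, inv_mul_cancel₀ hc, one_smul]
end

section
/- Let s₀,…,s₁₅ be real numbers and let S_r = s₀ + s₁e₀e₁ + s₂e₀e₂ + s₃e₀e₃ + s₄e₁e₂ + s₅e₃e₁ + s₆e₂e₃ + s₇e₀e₁e₂e₃ and S_d = −s₁₅ + s₁₄e₀e₁ + s₁₃e₀e₂ + s₁₂e₀e₃ + s₁₁e₁e₂ + s₁₀e₃e₁ + s₉e₂e₃ + s₈e₀e₁e₂e₃ in the even subalgebra of Cl₄. If S_r·reverse(S_d) + S_d·reverse(S_r) = 0, then the coefficients satisfy the two scalar relations s₀s₁₅ = Σᵢ₌₁⁷ sᵢs₁₅₋ᵢ and s₀s₈ = Σᵢ₌₁⁷ sᵢs₈₊ᵢ. -/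
open CliffordAlgebra

/-- Quaternion with given components, typed as `ℍ[ℝ]`. -/
def qm (a b c d : ℝ) : Quaternion ℝ := ⟨a, b, c, d⟩

@[simp] theorem mk_eq_qm (a b c d : ℝ) : (⟨a, b, c, d⟩ : Quaternion ℝ) = qm a b c d := rfl
@[simp] theorem one_eq_qm : (1 : Quaternion ℝ) = qm 1 0 0 0 := rfl
@[simp] theorem zero_eq_qm : (0 : Quaternion ℝ) = qm 0 0 0 0 := rfl
@[simp] theorem qm_re (a b c d : ℝ) : (qm a b c d).re = a := rfl
@[simp] theorem qm_imI (a b c d : ℝ) : (qm a b c d).imI = b := rfl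
@[simp] theorem qm_imJ (a b c d : ℝ) : (qm a b c d).imJ = c := rfl
@[simp] theorem qm_imK (a b c d : ℝ) : (qm a b c d).imK = d := rfl
@[simp] theorem qm_add (a b c d x y z w : ℝ) :
    qm a b c d + qm x y z w = qm (a + x) (b + y) (c + z) (d + w) := rfl
@[simp] theorem qm_neg (a b c d : ℝ) : -qm a b c d = qm (-a) (-b) (-c) (-d) := rfl
@[simp] theorem qm_smul (r a b c d : ℝ) : r • qm a b c d = qm (r * a) (r * b) (r * c) (r * d) := rfl
@[simp] theorem qm_mul (a b c d x y z w : ℝ) :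
    qm a b c d * qm x y z w = qm (a * x - b * y - c * z - d * w) (a * y + b * x + c * w - d * z)
      (a * z - b * w + c * x + d * y) (a * w + b * z - c * y + d * x) := by
  ext <;> simp only [Quaternion.re_mul, Quaternion.imI_mul, Quaternion.imJ_mul, Quaternion.imK_mul,
    qm_re, qm_imI, qm_imJ, qm_imK] <;> ring

open Quaternion in
/-- The linear map realizing `ℝ⁴` inside `M₂(ℍ)`. -/
noncomputable def fQ : (Fin 4 → ℝ) →ₗ[ℝ] Matrix (Fin 2) (Fin 2) ℍ[ℝ] where
  toFun v := !![0, ⟨v 0, -(v 1), -(v 2), -(v 3)⟩; ⟨v 0, v 1, v 2, v 3⟩, 0]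
  map_add' v w := by
    ext i j <;> fin_cases i <;> fin_cases j <;>
      simp [Matrix.add_apply] <;> ring
  map_smul' c v := by
    ext i j <;> fin_cases i <;> fin_cases j <;>
      simp [Matrix.smul_apply]

theorem hfQ (v : Fin 4 → ℝ) :
    fQ v * fQ v = algebraMap ℝ (Matrix (Fin 2) (Fin 2) (Quaternion ℝ)) (Q4 v) := by
  rw [Algebra.algebraMap_eq_smul_one]
  ext i j <;> fin_cases i <;> fin_cases j <;>
    simp [fQ, Q4, Matrix.mul_apply, Fin.sum_univ_four, Fin.sum_univ_two,
      QuadraticMap.weightedSumSquares_apply, Matrix.one_apply, Matrix.smul_apply] <;> ring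

/-- The algebra morphism `Cl₄ → M₂(ℍ)`. -/
noncomputable def φ : CliffordAlgebra Q4 →ₐ[ℝ] Matrix (Fin 2) (Fin 2) (Quaternion ℝ) :=
  CliffordAlgebra.lift Q4 ⟨fQ, hfQ⟩

theorem reverse_e (i : Fin 4) : reverse (e i) = e i := by rw [e, reverse_ι]

theorem he0 : φ (e 0) = !![0, ⟨1,0,0,0⟩; ⟨1,0,0,0⟩, 0] := by
  rw [φ, e, CliffordAlgebra.lift_ι_apply]
  ext i j <;> fin_cases i <;> fin_cases j <;> simp [fQ, Pi.single_apply]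

theorem he1 : φ (e 1) = !![0, ⟨0,-1,0,0⟩; ⟨0,1,0,0⟩, 0] := by
  rw [φ, e, CliffordAlgebra.lift_ι_apply]
  ext i j <;> fin_cases i <;> fin_cases j <;> simp [fQ, Pi.single_apply]

theorem he2 : φ (e 2) = !![0, ⟨0,0,-1,0⟩; ⟨0,0,1,0⟩, 0] := by
  rw [φ, e, CliffordAlgebra.lift_ι_apply]
  ext i j <;> fin_cases i <;> fin_cases j <;> simp [fQ, Pi.single_apply]

theorem he3 : φ (e 3) = !![0, ⟨0,0,0,-1⟩; ⟨0,0,0,1⟩, 0] := by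
  rw [φ, e, CliffordAlgebra.lift_ι_apply]
  ext i j <;> fin_cases i <;> fin_cases j <;> simp [fQ, Pi.single_apply]

set_option maxHeartbeats 2000000 in
theorem phiEven (c₀ c₁ c₂ c₃ c₄ c₅ c₆ c₇ : ℝ) :
    φ (c₀ • (1 : CliffordAlgebra Q4) + c₁ • (e 0 * e 1) + c₂ • (e 0 * e 2) +
      c₃ • (e 0 * e 3) + c₄ • (e 1 * e 2) + c₅ • (e 3 * e 1) + c₆ • (e 2 * e 3) +
      c₇ • (e 0 * e 1 * e 2 * e 3)) =
    !![⟨c₀+c₇, c₁-c₆, c₂-c₅, c₃-c₄⟩, 0;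
       0, ⟨c₀-c₇, -(c₁+c₆), -(c₂+c₅), -(c₃+c₄)⟩] := by
  simp only [map_add, map_smul, map_mul, map_one, he0, he1, he2, he3]
  ext i j <;> fin_cases i <;> fin_cases j <;>
    simp [Matrix.mul_apply, Matrix.add_apply, Matrix.smul_apply, Matrix.one_apply,
      Fin.sum_univ_two] <;> ring

set_option maxHeartbeats 2000000 in
theorem phiEvenRev (c₀ c₁ c₂ c₃ c₄ c₅ c₆ c₇ : ℝ) :
    φ (reverse (c₀ • (1 : CliffordAlgebra Q4) + c₁ • (e 0 * e 1) + c₂ • (e 0 * e 2) +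
      c₃ • (e 0 * e 3) + c₄ • (e 1 * e 2) + c₅ • (e 3 * e 1) + c₆ • (e 2 * e 3) +
      c₇ • (e 0 * e 1 * e 2 * e 3))) =
    !![⟨c₀+c₇, -(c₁-c₆), -(c₂-c₅), -(c₃-c₄)⟩, 0;
       0, ⟨c₀-c₇, c₁+c₆, c₂+c₅, c₃+c₄⟩] := by
  simp only [map_add, map_smul, reverse.map_mul, reverse.map_one, reverse_e,
    map_mul, map_one, he0, he1, he2, he3]
  ext i j <;> fin_cases i <;> fin_cases j <;>
    simp [Matrix.mul_apply, Matrix.add_apply, Matrix.smul_apply, Matrix.one_apply,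
      Fin.sum_univ_two] <;> ring

set_option maxHeartbeats 2000000 in
/-- The orthogonality condition `S_r·S_d† + S_d·S_r† = 0` forces the two scalar
relations `s₀s₁₅ = Σᵢ₌₁⁷ sᵢs₁₅₋ᵢ` and `s₀s₈ = Σᵢ₌₁⁷ sᵢs₈₊ᵢ` on the coefficients. -/
theorem orthogonality_coefficient_relations
    (s₀ s₁ s₂ s₃ s₄ s₅ s₆ s₇ s₈ s₉ s₁₀ s₁₁ s₁₂ s₁₃ s₁₄ s₁₅ : ℝ)
    (Sr Sd : CliffordAlgebra Q4)
    (hSr : Sr = s₀ • (1 : CliffordAlgebra Q4) + s₁ • (e 0 * e 1) + s₂ • (e 0 * e 2) +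
      s₃ • (e 0 * e 3) + s₄ • (e 1 * e 2) + s₅ • (e 3 * e 1) + s₆ • (e 2 * e 3) +
      s₇ • (e 0 * e 1 * e 2 * e 3))
    (hSd : Sd = (-s₁₅) • (1 : CliffordAlgebra Q4) + s₁₄ • (e 0 * e 1) + s₁₃ • (e 0 * e 2) +
      s₁₂ • (e 0 * e 3) + s₁₁ • (e 1 * e 2) + s₁₀ • (e 3 * e 1) + s₉ • (e 2 * e 3) +
      s₈ • (e 0 * e 1 * e 2 * e 3))
    (h : Sr * reverse Sd + Sd * reverse Sr = 0) :
    s₀ * s₁₅ = s₁ * s₁₄ + s₂ * s₁₃ + s₃ * s₁₂ + s₄ * s₁₁ + s₅ * s₁₀ + s₆ * s₉ + s₇ * s₈ ∧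
    s₀ * s₈ = s₁ * s₉ + s₂ * s₁₀ + s₃ * s₁₁ + s₄ * s₁₂ + s₅ * s₁₃ + s₆ * s₁₄ + s₇ * s₁₅ := by
  rw [hSr, hSd] at h
  have h2 := congrArg φ h
  rw [map_add, map_mul, map_mul, map_zero, phiEven, phiEven, phiEvenRev, phiEvenRev] at h2
  have h00 := congrArg (fun M => (M 0 0).re) h2
  have h11 := congrArg (fun M => (M 1 1).re) h2
  simp only [Matrix.mul_apply, Matrix.add_apply, Fin.sum_univ_two] at h00 h11
  simp at h00 h11
  constructor <;> nlinarith [h00, h11]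
end
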